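/- Under the two-state stationary Markov chain assumptions, for every integer t ≥ 1: E((1−X_t)(1−X_{t−1})) = (1+α₁)/((1+α₀)(1+α₀+α₁)) and Var((1−X_t)(1−X_{t−1})) = α₀(1+α₁)(α₀+α₁+2)/((1+α₀)²(1+α₀+α₁)²); moreover, for all integers t, s ≥ 1 with t ≠ s, Cov((1−X_t)(1−X_{t−1}), (1−X_s)(1−X_{s−1})) = (α₁/(1+α₀+α₁))^{|t−s|−1} · α₀(1+α₁)²/((1+α₀)²(1+α₀+α₁)²). -/

import Mathlib

open MeasureTheory ProbabilityTheory Real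

/-- A two-state stationary Markov chain with parameters `α₀, α₁`. -/
structure TwoStateChain (Ω : Type) [MeasurableSpace Ω] (μ : Measure Ω)
    (α₀ α₁ : ℝ) (X : ℕ → Ω → ℝ) : Prop where
  isProb : IsProbabilityMeasure μ
  pos₀ : 0 < α₀
  pos₁ : 0 < α₁
  meas : ∀ t, Measurable (X t)
  binary : ∀ t ω, X t ω = 0 ∨ X t ω = 1
  init : (μ {ω | X 0 ω = 1}).toReal = α₀ / (1 + α₀)
  markov_zero : ∀ t : ℕ, 1 ≤ t → ∀ x : ℕ → ℝ,
    (∀ s, s < t → x s = 0 ∨ x s = 1) → x (t - 1) = 0 →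
    0 < μ {ω | ∀ s, s < t → X s ω = x s} →
    (μ ({ω | X t ω = 1} ∩ {ω | ∀ s, s < t → X s ω = x s})).toReal =
      (α₀ / (1 + α₀ + α₁)) * (μ {ω | ∀ s, s < t → X s ω = x s}).toReal
  markov_one : ∀ t : ℕ, 1 ≤ t → ∀ x : ℕ → ℝ,
    (∀ s, s < t → x s = 0 ∨ x s = 1) → x (t - 1) = 1 →
    0 < μ {ω | ∀ s, s < t → X s ω = x s} →
    (μ ({ω | X t ω = 1} ∩ {ω | ∀ s, s < t → X s ω = x s})).toReal =
      ((α₀ + α₁) / (1 + α₀ + α₁)) * (μ {ω | ∀ s, s < t → X s ω = x s}).toReal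

/-- Covariance `Cov(f,g) = E(fg) − E(f)E(g)`. -/
noncomputable def covQ {Ω : Type} [MeasurableSpace Ω] (μ : Measure Ω) (f g : Ω → ℝ) : ℝ :=
  (∫ ω, f ω * g ω ∂μ) - (∫ ω, f ω ∂μ) * ∫ ω, g ω ∂μ



theorem covQ_comm {Ω : Type} [MeasurableSpace Ω] (μ : Measure Ω) (f g : Ω → ℝ) :
    covQ μ f g = covQ μ g f := by
  unfold covQ
  rw [show (fun ω => f ω * g ω) = (fun ω => g ω * f ω) from funext fun ω => mul_comm _ _]
  ring

section Aux
variable {Ω : Type} [MeasurableSpace Ω] {μ : Measure Ω} {X : ℕ → Ω → ℝ}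

open Classical in
theorem step_one (hP : IsProbabilityMeasure μ) (hmeas : ∀ t, Measurable (X t))
    (hbin : ∀ t ω, X t ω = 0 ∨ X t ω = 1)
    (t : ℕ) (Q : (ℕ → ℝ) → Prop)
    (hQ : ∀ f g : ℕ → ℝ, (∀ s, s < t → f s = g s) → Q f → Q g)
    (r : ℝ)
    (hy : ∀ x : ℕ → ℝ, (∀ s, s < t → x s = 0 ∨ x s = 1) → Q x →
      0 < μ {ω | ∀ s, s < t → X s ω = x s} →
      (μ ({ω | X t ω = 1} ∩ {ω | ∀ s, s < t → X s ω = x s})).toReal =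
        r * (μ {ω | ∀ s, s < t → X s ω = x s}).toReal) :
    (μ ({ω | X t ω = 1} ∩ {ω | Q (fun s => X s ω)})).toReal =
      r * (μ {ω | Q (fun s => X s ω)}).toReal := by
  set F : (Fin t → Bool) → (ℕ → ℝ) := fun v s =>
    if h : s < t then (if v ⟨s, h⟩ then 1 else 0) else 0 with hF
  set C : (Fin t → Bool) → Set Ω := fun v => {ω | ∀ s, s < t → X s ω = F v s} with hC
  have hFbin : ∀ v s, s < t → F v s = 0 ∨ F v s = 1 := by
    intro v s hs
    simp only [hF, dif_pos hs]
    by_cases h : v ⟨s, hs⟩ <;> simp [h]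
  have hCmeas : ∀ v, MeasurableSet (C v) := by
    intro v
    have : C v = ⋂ s ∈ Finset.range t, (X s) ⁻¹' {F v s} := by
      ext ω; simp [hC, Set.mem_iInter]
    rw [this]
    exact Finset.measurableSet_biInter _ fun s _ => (hmeas s) (measurableSet_singleton _)
  set V : Finset (Fin t → Bool) := Finset.univ.filter (fun v => Q (F v)) with hV
  -- decomposition of the event into cylinders
  have hdec : {ω | Q (fun s => X s ω)} = ⋃ v ∈ V, C v := by
    ext ω
    simp only [Set.mem_setOf_eq, Set.mem_iUnion, hV, Finset.mem_filter, Finset.mem_univ,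
      true_and]
    constructor
    · intro hQω
      refine ⟨fun i => if X i.1 ω = 1 then true else false, ?_, ?_⟩
      · refine hQ _ _ ?_ hQω
        intro s hs
        simp only [hF, dif_pos hs]
        rcases hbin s ω with h | h <;> simp [h]
      · intro s hs
        simp only [hF, dif_pos hs]
        rcases hbin s ω with h | h <;> simp [h]
    · rintro ⟨v, hQv, hv⟩
      refine hQ _ _ ?_ hQv
      intro s hs; exact (hv s hs).symm
  have hdisj : (V : Set (Fin t → Bool)).PairwiseDisjoint C := by
    intro v _ w _ hvw
    apply Set.disjoint_left.mpr
    intro ω hωv hωw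
    apply hvw
    funext i
    have h1 := hωv i.1 i.2
    have h2 := hωw i.1 i.2
    have : F v i.1 = F w i.1 := h1 ▸ h2 ▸ rfl
    simp only [hF, dif_pos i.2, Fin.eta] at this
    by_cases hv : v i <;> by_cases hw : w i <;> simp_all
  have key : ∀ v ∈ V, (μ ({ω | X t ω = 1} ∩ C v)).toReal = r * (μ (C v)).toReal := by
    intro v hv
    rcases eq_or_lt_of_le (zero_le : 0 ≤ μ (C v)) with h0 | hpos
    · have h1 : μ ({ω | X t ω = 1} ∩ C v) = 0 :=
        measure_mono_null Set.inter_subset_right h0.symm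
      rw [h1, ← h0]; simp
    · exact hy (F v) (hFbin v) (by simpa [hV] using hv) hpos
  have hsum1 : μ ({ω | X t ω = 1} ∩ ⋃ v ∈ V, C v) = ∑ v ∈ V, μ ({ω | X t ω = 1} ∩ C v) := by
    rw [Set.inter_iUnion₂, measure_biUnion_finset]
    · intro v hv w hw hvw
      exact Disjoint.mono Set.inter_subset_right Set.inter_subset_right (hdisj hv hw hvw)
    · exact fun v _ => ((hmeas t) (measurableSet_singleton _)).inter (hCmeas v)
  have hsum2 : μ (⋃ v ∈ V, C v) = ∑ v ∈ V, μ (C v) :=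
    measure_biUnion_finset hdisj fun v _ => hCmeas v
  rw [hdec, hsum1, hsum2, ENNReal.toReal_sum (fun v _ => measure_ne_top μ _),
    ENNReal.toReal_sum (fun v _ => measure_ne_top μ _), Finset.mul_sum]
  exact Finset.sum_congr rfl key

theorem split_evt (hP : IsProbabilityMeasure μ) (hmeas : ∀ t, Measurable (X t))
    (hbin : ∀ t ω, X t ω = 0 ∨ X t ω = 1) (t : ℕ) (E : Set Ω) (hE : MeasurableSet E) :
    (μ E).toReal = (μ ({ω | X t ω = 0} ∩ E)).toReal + (μ ({ω | X t ω = 1} ∩ E)).toReal := by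
  have h0 : MeasurableSet {ω | X t ω = 0} := hmeas t (measurableSet_singleton 0)
  have h1 : MeasurableSet {ω | X t ω = 1} := hmeas t (measurableSet_singleton 1)
  have hu : E = ({ω | X t ω = 0} ∩ E) ∪ ({ω | X t ω = 1} ∩ E) := by
    ext ω; constructor
    · intro h; rcases hbin t ω with h' | h'
      · exact Or.inl ⟨h', h⟩
      · exact Or.inr ⟨h', h⟩
    · rintro (⟨_, h⟩ | ⟨_, h⟩) <;> exact h
  have hd : Disjoint ({ω | X t ω = 0} ∩ E) ({ω | X t ω = 1} ∩ E) := by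
    apply Set.disjoint_left.mpr
    rintro ω ⟨h0', _⟩ ⟨h1', _⟩
    simp only [Set.mem_setOf_eq] at h0' h1'
    norm_num [h0'] at h1'
  conv_lhs => rw [hu]
  rw [measure_union hd (h1.inter hE),
    ENNReal.toReal_add (measure_ne_top μ _) (measure_ne_top μ _)]

variable {α₀ α₁ : ℝ} (hc : TwoStateChain Ω μ α₀ α₁ X)
include hc

theorem cs_one (m : ℕ) (Q : (ℕ → ℝ) → Prop)
    (hQ : ∀ f g : ℕ → ℝ, (∀ s, s < m + 1 → f s = g s) → Q f → Q g)
    (y : ℝ) (hQy : ∀ f, Q f → f m = y) :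
    (μ ({ω | X (m+1) ω = 1} ∩ {ω | Q (fun s => X s ω)})).toReal =
      ((if y = 1 then α₀ + α₁ else α₀) / (1 + α₀ + α₁)) *
        (μ {ω | Q (fun s => X s ω)}).toReal := by
  apply step_one hc.isProb hc.meas hc.binary (m+1) Q hQ
  intro x hx hQx hpos
  by_cases hy1 : y = 1
  · rw [if_pos hy1]
    exact hc.markov_one (m+1) (Nat.le_add_left 1 m) x hx
      (by simpa using hy1 ▸ hQy x hQx) hpos
  · rw [if_neg hy1]
    have h0 : x m = 0 := by
      have := hQy x hQx
      rcases hx m (Nat.lt_succ_self m) with h | h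
      · exact h
      · exact absurd (this ▸ h) (by rw [this] at h; exact absurd h.symm (hy1 ∘ Eq.symm)) 
    exact hc.markov_zero (m+1) (Nat.le_add_left 1 m) x hx (by simpa using h0) hpos

theorem cs_zero (m : ℕ) (Q : (ℕ → ℝ) → Prop)
    (hQ : ∀ f g : ℕ → ℝ, (∀ s, s < m + 1 → f s = g s) → Q f → Q g)
    (y : ℝ) (hQy : ∀ f, Q f → f m = y)
    (hE : MeasurableSet {ω | Q (fun s => X s ω)}) :
    (μ ({ω | X (m+1) ω = 0} ∩ {ω | Q (fun s => X s ω)})).toReal =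
      ((if y = 1 then 1 else 1 + α₁) / (1 + α₀ + α₁)) *
        (μ {ω | Q (fun s => X s ω)}).toReal := by
  have hS : (1 : ℝ) + α₀ + α₁ ≠ 0 := by
    have := hc.pos₀; have := hc.pos₁; linarith
  have key := split_evt hc.isProb hc.meas hc.binary (m+1) _ hE
  have h1 := cs_one hc m Q hQ y hQy
  have h2 : (μ ({ω | X (m+1) ω = 0} ∩ {ω | Q (fun s => X s ω)})).toReal =
      (μ {ω | Q (fun s => X s ω)}).toReal -
        ((if y = 1 then α₀ + α₁ else α₀) / (1 + α₀ + α₁)) *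
          (μ {ω | Q (fun s => X s ω)}).toReal := by
    rw [← h1]; linarith [key]
  rw [h2]
  split_ifs <;> field_simp <;> ring
theorem marg : ∀ t, (μ {ω | X t ω = 1}).toReal = α₀ / (1 + α₀) := by
  have ha : (1:ℝ) + α₀ ≠ 0 := by have := hc.pos₀; linarith
  have hS : (1:ℝ) + α₀ + α₁ ≠ 0 := by have := hc.pos₀; have := hc.pos₁; linarith
  intro t
  induction t with
  | zero => exact hc.init
  | succ t ih =>
    haveI := hc.isProb
    have h0 : (μ {ω | X t ω = 0}).toReal = 1 - α₀ / (1 + α₀) := by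
      have h := split_evt hc.isProb hc.meas hc.binary t Set.univ MeasurableSet.univ
      simp only [Set.inter_univ, measure_univ, ENNReal.toReal_one] at h
      rw [ih] at h; linarith
    have e1 : (μ ({ω | X (t+1) ω = 1} ∩ {ω | X t ω = 0})).toReal =
        (α₀ / (1 + α₀ + α₁)) * (μ {ω | X t ω = 0}).toReal := by
      have h := cs_one hc t (fun f => f t = 0)
        (fun f g hfg hf => by rw [← hfg t (Nat.lt_succ_self t)]; exact hf) 0
        (fun f hf => hf)
      simpa using h
    have e2 : (μ ({ω | X (t+1) ω = 1} ∩ {ω | X t ω = 1})).toReal =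
        ((α₀ + α₁) / (1 + α₀ + α₁)) * (μ {ω | X t ω = 1}).toReal := by
      have h := cs_one hc t (fun f => f t = 1)
        (fun f g hfg hf => by rw [← hfg t (Nat.lt_succ_self t)]; exact hf) 1
        (fun f hf => hf)
      simpa using h
    have hsp := split_evt hc.isProb hc.meas hc.binary t {ω | X (t+1) ω = 1}
      (hc.meas (t+1) (measurableSet_singleton 1))
    rw [Set.inter_comm {ω | X t ω = 0}, Set.inter_comm {ω | X t ω = 1}, e1, e2, h0, ih] at hsp
    rw [hsp]
    field_simp
    ring

theorem marg0 : ∀ t, (μ {ω | X t ω = 0}).toReal = 1 / (1 + α₀) := by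
  have ha : (1:ℝ) + α₀ ≠ 0 := by have := hc.pos₀; linarith
  intro t
  haveI := hc.isProb
  have h := split_evt hc.isProb hc.meas hc.binary t Set.univ MeasurableSet.univ
  simp only [Set.inter_univ, measure_univ, ENNReal.toReal_one] at h
  rw [marg hc t] at h
  rw [eq_comm]
  field_simp at h ⊢
  linarith

theorem muA (m : ℕ) : (μ {ω | X m ω = 0 ∧ X (m+1) ω = 0}).toReal =
    (1 + α₁) / ((1 + α₀) * (1 + α₀ + α₁)) := by
  have hset : {ω | X m ω = 0 ∧ X (m+1) ω = 0} =
      {ω | X (m+1) ω = 0} ∩ {ω | X m ω = 0} := by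
    ext ω; simp [and_comm]
  have h := cs_zero hc m (fun f => f m = 0)
    (fun f g hfg hf => by rw [← hfg m (Nat.lt_succ_self m)]; exact hf) 0
    (fun f hf => hf) (hc.meas m (measurableSet_singleton 0))
  rw [hset]
  norm_num at h
  rw [h, marg0 hc m]
  rw [div_mul_div_comm, mul_one, mul_comm (1 + α₀ + α₁)]

theorem ukey (m : ℕ) : ∀ k : ℕ,
    (μ {ω | X m ω = 0 ∧ X (m+1) ω = 0 ∧ X (m+1+k) ω = 0}).toReal =
      ((1 + α₁) / ((1 + α₀) * (1 + α₀ + α₁))) *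
        (1 / (1 + α₀) + (α₀ / (1 + α₀)) * (α₁ / (1 + α₀ + α₁)) ^ k) := by
  have ha : (1:ℝ) + α₀ ≠ 0 := by have := hc.pos₀; linarith
  have hS : (1:ℝ) + α₀ + α₁ ≠ 0 := by have := hc.pos₀; have := hc.pos₁; linarith
  have mA : ∀ (a : ℕ) (y : ℝ), MeasurableSet {ω | X a ω = y} :=
    fun a y => hc.meas a (measurableSet_singleton y)
  intro k
  induction k with
  | zero =>
    have hset : {ω | X m ω = 0 ∧ X (m+1) ω = 0 ∧ X (m+1+0) ω = 0} =
        {ω | X m ω = 0 ∧ X (m+1) ω = 0} := by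
      ext ω; simp
    rw [hset, muA hc m, pow_zero]
    field_simp
  | succ k ih =>
    set T := m + 1 + k with hT
    have hmT : m < T := by omega
    have hm1T : m + 1 ≤ T := by omega
    -- split the event by the value of X T
    have hEmeas : MeasurableSet {ω | X m ω = 0 ∧ X (m+1) ω = 0 ∧ X (T+1) ω = 0} :=
      (mA m 0).inter ((mA (m+1) 0).inter (mA (T+1) 0))
    have hsp := split_evt hc.isProb hc.meas hc.binary T
      {ω | X m ω = 0 ∧ X (m+1) ω = 0 ∧ X (T+1) ω = 0} hEmeas
    -- identify each piece via cs_zero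
    have e0 : ({ω | X T ω = 0} ∩ {ω | X m ω = 0 ∧ X (m+1) ω = 0 ∧ X (T+1) ω = 0}) =
        {ω | X (T+1) ω = 0} ∩ {ω | X m ω = 0 ∧ X (m+1) ω = 0 ∧ X T ω = 0} := by
      ext ω; simp only [Set.mem_inter_iff, Set.mem_setOf_eq]; tauto
    have e1 : ({ω | X T ω = 1} ∩ {ω | X m ω = 0 ∧ X (m+1) ω = 0 ∧ X (T+1) ω = 0}) =
        {ω | X (T+1) ω = 0} ∩ {ω | X m ω = 0 ∧ X (m+1) ω = 0 ∧ X T ω = 1} := by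
      ext ω; simp only [Set.mem_inter_iff, Set.mem_setOf_eq]; tauto
    have hQdep : ∀ (y : ℝ) (f g : ℕ → ℝ), (∀ s, s < T + 1 → f s = g s) →
        (f m = 0 ∧ f (m+1) = 0 ∧ f T = y) → (g m = 0 ∧ g (m+1) = 0 ∧ g T = y) := by
      intro y f g hfg ⟨h1, h2, h3⟩
      exact ⟨hfg m (by omega) ▸ h1, hfg (m+1) (by omega) ▸ h2, hfg T (by omega) ▸ h3⟩
    have c0 := cs_zero hc T (fun f => f m = 0 ∧ f (m+1) = 0 ∧ f T = 0)
      (hQdep 0) 0 (fun f hf => hf.2.2)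
      ((mA m 0).inter ((mA (m+1) 0).inter (mA T 0)))
    have c1 := cs_zero hc T (fun f => f m = 0 ∧ f (m+1) = 0 ∧ f T = 1)
      (hQdep 1) 1 (fun f hf => hf.2.2)
      ((mA m 0).inter ((mA (m+1) 0).inter (mA T 1)))
    simp only [] at c0 c1
    -- measure of the y = 1 piece via splitting A by X T
    have hApieces := split_evt hc.isProb hc.meas hc.binary T
      {ω | X m ω = 0 ∧ X (m+1) ω = 0} ((mA m 0).inter (mA (m+1) 0))
    have eA0 : ({ω | X T ω = 0} ∩ {ω | X m ω = 0 ∧ X (m+1) ω = 0}) =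
        {ω | X m ω = 0 ∧ X (m+1) ω = 0 ∧ X T ω = 0} := by
      ext ω; simp only [Set.mem_inter_iff, Set.mem_setOf_eq]; tauto
    have eA1 : ({ω | X T ω = 1} ∩ {ω | X m ω = 0 ∧ X (m+1) ω = 0}) =
        {ω | X m ω = 0 ∧ X (m+1) ω = 0 ∧ X T ω = 1} := by
      ext ω; simp only [Set.mem_inter_iff, Set.mem_setOf_eq]; tauto
    rw [eA0, eA1, muA hc m] at hApieces
    rw [e0, e1, c0, c1] at hsp
    norm_num at hsp
    rw [ih] at hsp hApieces
    have hμ1 : (μ {ω | X m ω = 0 ∧ X (m+1) ω = 0 ∧ X T ω = 1}).toReal =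
        (1 + α₁) / ((1 + α₀) * (1 + α₀ + α₁)) -
          ((1 + α₁) / ((1 + α₀) * (1 + α₀ + α₁))) *
            (1 / (1 + α₀) + (α₀ / (1 + α₀)) * (α₁ / (1 + α₀ + α₁)) ^ k) := by
      linarith
    have hTT : m + 1 + (k + 1) = T + 1 := by omega
    rw [hTT, hsp, hμ1, pow_succ]
    have hSk : ((1:ℝ) + α₀ + α₁) ^ k ≠ 0 := pow_ne_zero k hS
    rw [div_pow]
    field_simp
    ring

theorem fourpt (m : ℕ) : ∀ k : ℕ,
    (μ {ω | X m ω = 0 ∧ X (m+1) ω = 0 ∧ X (m+1+k) ω = 0 ∧ X (m+1+k+1) ω = 0}).toReal =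
      ((1 + α₁) / (1 + α₀ + α₁)) * (((1 + α₁) / ((1 + α₀) * (1 + α₀ + α₁))) *
        (1 / (1 + α₀) + (α₀ / (1 + α₀)) * (α₁ / (1 + α₀ + α₁)) ^ k)) := by
  have mA : ∀ (a : ℕ) (y : ℝ), MeasurableSet {ω | X a ω = y} :=
    fun a y => hc.meas a (measurableSet_singleton y)
  intro k
  set T := m + 1 + k with hT
  have hset : {ω | X m ω = 0 ∧ X (m+1) ω = 0 ∧ X T ω = 0 ∧ X (T+1) ω = 0} =
      {ω | X (T+1) ω = 0} ∩ {ω | X m ω = 0 ∧ X (m+1) ω = 0 ∧ X T ω = 0} := by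
    ext ω; simp only [Set.mem_inter_iff, Set.mem_setOf_eq]; tauto
  have hQdep : ∀ (f g : ℕ → ℝ), (∀ s, s < T + 1 → f s = g s) →
      (f m = 0 ∧ f (m+1) = 0 ∧ f T = 0) → (g m = 0 ∧ g (m+1) = 0 ∧ g T = 0) := by
    intro f g hfg ⟨h1, h2, h3⟩
    exact ⟨hfg m (by omega) ▸ h1, hfg (m+1) (by omega) ▸ h2, hfg T (by omega) ▸ h3⟩
  have c0 := cs_zero hc T (fun f => f m = 0 ∧ f (m+1) = 0 ∧ f T = 0)
    hQdep 0 (fun f hf => hf.2.2)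
    ((mA m 0).inter ((mA (m+1) 0).inter (mA T 0)))
  simp only [] at c0
  norm_num at c0
  rw [hset, c0, ukey hc m k]


theorem int_pair (m : ℕ) :
    (∫ ω, (1 - X (m+1) ω) * (1 - X m ω) ∂μ) =
      (μ {ω | X m ω = 0 ∧ X (m+1) ω = 0}).toReal := by
  have hfun : (fun ω => (1 - X (m+1) ω) * (1 - X m ω)) =
      Set.indicator {ω | X m ω = 0 ∧ X (m+1) ω = 0} (fun _ => (1:ℝ)) := by
    funext ω
    rcases hc.binary m ω with h1 | h1 <;> rcases hc.binary (m+1) ω with h2 | h2 <;>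
      simp [Set.indicator_apply, h1, h2]
  have hms : MeasurableSet {ω | X m ω = 0 ∧ X (m+1) ω = 0} :=
    (hc.meas m (measurableSet_singleton 0)).inter (hc.meas (m+1) (measurableSet_singleton 0))
  rw [hfun, integral_indicator_const (1:ℝ) hms]
  simp
  rfl

theorem int_sq (m : ℕ) :
    (∫ ω, ((1 - X (m+1) ω) * (1 - X m ω)) * ((1 - X (m+1) ω) * (1 - X m ω)) ∂μ) =
      (μ {ω | X m ω = 0 ∧ X (m+1) ω = 0}).toReal := by
  have hfun : (fun ω => ((1 - X (m+1) ω) * (1 - X m ω)) * ((1 - X (m+1) ω) * (1 - X m ω))) =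
      Set.indicator {ω | X m ω = 0 ∧ X (m+1) ω = 0} (fun _ => (1:ℝ)) := by
    funext ω
    rcases hc.binary m ω with h1 | h1 <;> rcases hc.binary (m+1) ω with h2 | h2 <;>
      simp [Set.indicator_apply, h1, h2]
  have hms : MeasurableSet {ω | X m ω = 0 ∧ X (m+1) ω = 0} :=
    (hc.meas m (measurableSet_singleton 0)).inter (hc.meas (m+1) (measurableSet_singleton 0))
  rw [hfun, integral_indicator_const (1:ℝ) hms]
  simp
  rfl

theorem int_cross (m k : ℕ) :
    (∫ ω, ((1 - X (m+1+k+1) ω) * (1 - X (m+1+k) ω)) * ((1 - X (m+1) ω) * (1 - X m ω)) ∂μ) =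
      (μ {ω | X m ω = 0 ∧ X (m+1) ω = 0 ∧ X (m+1+k) ω = 0 ∧ X (m+1+k+1) ω = 0}).toReal := by
  have mA : ∀ (a : ℕ) (y : ℝ), MeasurableSet {ω | X a ω = y} :=
    fun a y => hc.meas a (measurableSet_singleton y)
  have hfun : (fun ω => ((1 - X (m+1+k+1) ω) * (1 - X (m+1+k) ω)) *
        ((1 - X (m+1) ω) * (1 - X m ω))) =
      Set.indicator {ω | X m ω = 0 ∧ X (m+1) ω = 0 ∧ X (m+1+k) ω = 0 ∧ X (m+1+k+1) ω = 0}
        (fun _ => (1:ℝ)) := by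
    funext ω
    rcases hc.binary m ω with h1 | h1 <;> rcases hc.binary (m+1) ω with h2 | h2 <;>
      rcases hc.binary (m+1+k) ω with h3 | h3 <;> rcases hc.binary (m+1+k+1) ω with h4 | h4 <;>
      simp [Set.indicator_apply, h1, h2, h3, h4]
  have hms : MeasurableSet {ω | X m ω = 0 ∧ X (m+1) ω = 0 ∧ X (m+1+k) ω = 0 ∧ X (m+1+k+1) ω = 0} :=
    (mA m 0).inter ((mA (m+1) 0).inter ((mA (m+1+k) 0).inter (mA (m+1+k+1) 0)))
  rw [hfun, integral_indicator_const (1:ℝ) hms]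
  simp
  rfl

theorem cov_main (m k : ℕ) :
    covQ μ (fun ω => (1 - X (m+1+k+1) ω) * (1 - X (m+1+k) ω))
      (fun ω => (1 - X (m+1) ω) * (1 - X m ω)) =
    (α₁ / (1 + α₀ + α₁)) ^ k * (α₀ * (1 + α₁) ^ 2 / ((1 + α₀) ^ 2 * (1 + α₀ + α₁) ^ 2)) := by
  have ha : (1:ℝ) + α₀ ≠ 0 := by have := hc.pos₀; linarith
  have hS : (1:ℝ) + α₀ + α₁ ≠ 0 := by have := hc.pos₀; have := hc.pos₁; linarith
  have hSk : ((1:ℝ) + α₀ + α₁) ^ k ≠ 0 := pow_ne_zero k hS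
  have h1 : (m+1+k) + 1 = m+1+k+1 := rfl
  unfold covQ
  rw [int_cross hc m k, fourpt hc m k, int_pair hc m,
    int_pair hc (m+1+k), muA hc m, muA hc (m+1+k)]
  rw [div_pow]
  field_simp
  ring
end Aux


/-- Lemma (part ii): mean, variance and autocovariance of `(1−X_t)(1−X_{t−1})` for
the two-state stationary Markov chain. -/
theorem twoStateChain_coprod_moments (Ω : Type) [MeasurableSpace Ω] (μ : Measure Ω)
    (α₀ α₁ : ℝ) (X : ℕ → Ω → ℝ) (hchain : TwoStateChain Ω μ α₀ α₁ X) :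
    (∀ t : ℕ, 1 ≤ t →
      ((∫ ω, (1 - X t ω) * (1 - X (t - 1) ω) ∂μ) =
        (1 + α₁) / ((1 + α₀) * (1 + α₀ + α₁)) ∧
      covQ μ (fun ω => (1 - X t ω) * (1 - X (t - 1) ω))
          (fun ω => (1 - X t ω) * (1 - X (t - 1) ω)) =
        α₀ * (1 + α₁) * (α₀ + α₁ + 2) / ((1 + α₀) ^ 2 * (1 + α₀ + α₁) ^ 2))) ∧
    ∀ t s : ℕ, 1 ≤ t → 1 ≤ s → t ≠ s →
      covQ μ (fun ω => (1 - X t ω) * (1 - X (t - 1) ω))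
          (fun ω => (1 - X s ω) * (1 - X (s - 1) ω)) =
        (α₁ / (1 + α₀ + α₁)) ^ (((t : ℤ) - (s : ℤ)).natAbs - 1) *
          (α₀ * (1 + α₁) ^ 2 / ((1 + α₀) ^ 2 * (1 + α₀ + α₁) ^ 2)) := by
  have ha : (1:ℝ) + α₀ ≠ 0 := by have := hchain.pos₀; linarith
  have hS : (1:ℝ) + α₀ + α₁ ≠ 0 := by
    have := hchain.pos₀; have := hchain.pos₁; linarith
  constructor
  · intro t ht
    obtain ⟨m, rfl⟩ : ∃ m, t = m + 1 := ⟨t - 1, by omega⟩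
    simp only [Nat.add_sub_cancel]
    constructor
    · rw [int_pair hchain m, muA hchain m]
    · unfold covQ
      rw [int_sq hchain m, int_pair hchain m, muA hchain m]
      field_simp
      ring
  · intro t s ht hs hne
    rcases Nat.lt_or_ge t s with hlt | hge
    · obtain ⟨m, rfl⟩ : ∃ m, t = m + 1 := ⟨t - 1, by omega⟩
      obtain ⟨k, rfl⟩ : ∃ k, s = m + 1 + k + 1 := ⟨s - (m+1) - 1, by omega⟩
      rw [covQ_comm]
      simp only [Nat.add_sub_cancel]
      have he : (((m+1 : ℕ) : ℤ) - ((m+1+k+1 : ℕ) : ℤ)).natAbs - 1 = k := by omega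
      rw [he]
      exact cov_main hchain m k
    · obtain ⟨m, rfl⟩ : ∃ m, s = m + 1 := ⟨s - 1, by omega⟩
      obtain ⟨k, rfl⟩ : ∃ k, t = m + 1 + k + 1 := ⟨t - (m+1) - 1, by omega⟩
      simp only [Nat.add_sub_cancel]
      have he : (((m+1+k+1 : ℕ) : ℤ) - ((m+1 : ℕ) : ℤ)).natAbs - 1 = k := by omega
      rw [he]
      exact cov_main hchain m k
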